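/- Let H be an N×N Hermitian matrix and R(z) = (H − zI)^{−1}. Then for every u ∈ ℝ, v > 0, s ≥ 1 and all indices j, k: |R_{jj}(u+iv)| ≤ s |R_{jj}(u+isv)|, and |R_{jk}(u+iv)| ≤ |R_{jk}(u+isv)| + (s−1) v |[R(u+iv) R(u+isv)]_{jk}| ≤ |R_{jk}(u+isv)| + (s−1) √( Im R_{jj}(u+isv) · Im R_{kk}(u+isv) ). -/

import Mathlib

open Complex Matrix

lemma aux_entry {N : ℕ} (U : Matrix (Fin N) (Fin N) ℂ) (d : Fin N → ℂ) (j k : Fin N) :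
    (U * diagonal d * star U) j k = ∑ a, U j a * d a * (starRingEnd ℂ) (U k a) := by
  simp only [Matrix.mul_apply, Matrix.mul_diagonal, Matrix.star_apply]
  apply Finset.sum_congr rfl
  intro a _
  simp [Finset.mul_sum, Finset.sum_mul, Matrix.diagonal]

lemma aux_diag_sub {N : ℕ} (l : Fin N → ℝ) (z : ℂ) :
    diagonal (fun a => (l a : ℂ) - z) =
      diagonal (fun a => (l a : ℂ)) - z • (1 : Matrix (Fin N) (Fin N) ℂ) := by
  ext i j
  by_cases h : i = j <;> simp [Matrix.diagonal, Matrix.one_apply, h]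

lemma aux_inv {N : ℕ} (U : Matrix (Fin N) (Fin N) ℂ)
    (hU1 : U * star U = 1) (hU2 : star U * U = 1)
    (l : Fin N → ℝ) (z : ℂ) (hz : ∀ a, ((l a : ℂ) - z) ≠ 0) :
    (U * diagonal (fun a => (l a : ℂ)) * star U - z • 1)⁻¹
      = U * diagonal (fun a => ((l a : ℂ) - z)⁻¹) * star U := by
  apply inv_eq_right_inv
  have h1 : U * diagonal (fun a => (l a : ℂ)) * star U - z • 1
      = U * diagonal (fun a => (l a : ℂ) - z) * star U := by
    rw [aux_diag_sub, Matrix.mul_sub, Matrix.sub_mul, Matrix.mul_smul, Matrix.smul_mul,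
      Matrix.mul_one, hU1]
  rw [h1]
  calc (U * diagonal (fun a => (l a : ℂ) - z) * star U) *
        (U * diagonal (fun a => ((l a : ℂ) - z)⁻¹) * star U)
      = U * (diagonal (fun a => (l a : ℂ) - z) * ((star U * U) *
          (diagonal (fun a => ((l a : ℂ) - z)⁻¹) * star U))) := by
        simp only [Matrix.mul_assoc]
    _ = U * (diagonal (fun a => (l a : ℂ) - z) *
          diagonal (fun a => ((l a : ℂ) - z)⁻¹)) * star U := by
        rw [hU2, Matrix.one_mul]
        simp only [Matrix.mul_assoc]
    _ = 1 := by
        rw [Matrix.diagonal_mul_diagonal]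
        have : (fun a => ((l a : ℂ) - z) * ((l a : ℂ) - z)⁻¹) = fun _ => (1 : ℂ) := by
          funext a; exact mul_inv_cancel₀ (hz a)
        show U * diagonal (fun a => ((l a : ℂ) - z) * ((l a : ℂ) - z)⁻¹) * star U = 1
        rw [this, Matrix.diagonal_one, Matrix.mul_one, hU1]

lemma aux_prod {N : ℕ} (U : Matrix (Fin N) (Fin N) ℂ)
    (hU2 : star U * U = 1) (d1 d2 : Fin N → ℂ) :
    (U * diagonal d1 * star U) * (U * diagonal d2 * star U)
      = U * diagonal (fun a => d1 a * d2 a) * star U := by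
  calc (U * diagonal d1 * star U) * (U * diagonal d2 * star U)
      = U * (diagonal d1 * ((star U * U) * (diagonal d2 * star U))) := by
        simp only [Matrix.mul_assoc]
    _ = U * (diagonal d1 * diagonal d2) * star U := by
        rw [hU2, Matrix.one_mul]
        simp only [Matrix.mul_assoc]
    _ = U * diagonal (fun a => d1 a * d2 a) * star U := by
        rw [Matrix.diagonal_mul_diagonal]

lemma aux_resid (x w1 w2 : ℂ) (h1 : x - w1 ≠ 0) (h2 : x - w2 ≠ 0) :
    (x - w1)⁻¹ = (x - w2)⁻¹ + (w1 - w2) * ((x - w1)⁻¹ * (x - w2)⁻¹) := by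
  field_simp
  ring


/-- Let `H` be an `N×N` Hermitian matrix and `R(z) = (H − zI)⁻¹`.
Then for every `u ∈ ℝ`, `v > 0`, `s ≥ 1` and all indices `j, k`:
`|R_jj(u+iv)| ≤ s |R_jj(u+isv)|`, and
`|R_jk(u+iv)| ≤ |R_jk(u+isv)| + (s−1) v |[R(u+iv) R(u+isv)]_jk|
             ≤ |R_jk(u+isv)| + (s−1) √(Im R_jj(u+isv) · Im R_kk(u+isv))`. -/
theorem stmt_11 (N : ℕ) (H : Matrix (Fin N) (Fin N) ℂ) (hH : H.IsHermitian)
    (u v s : ℝ) (hv : 0 < v) (hs : 1 ≤ s) (j k : Fin N)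
    (R : ℂ → Matrix (Fin N) (Fin N) ℂ)
    (hR : ∀ z : ℂ, R z = (H - z • (1 : Matrix (Fin N) (Fin N) ℂ))⁻¹) :
    ‖(R (u + v * I) j j)‖ ≤ s * ‖(R (u + s * v * I) j j)‖ ∧
    ‖(R (u + v * I) j k)‖ ≤
      ‖(R (u + s * v * I) j k)‖ +
        (s - 1) * v * ‖((R (u + v * I) * R (u + s * v * I)) j k)‖ ∧
    ‖(R (u + s * v * I) j k)‖ +
        (s - 1) * v * ‖((R (u + v * I) * R (u + s * v * I)) j k)‖ ≤
      ‖(R (u + s * v * I) j k)‖ +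
        (s - 1) * Real.sqrt ((R (u + s * v * I) j j).im * (R (u + s * v * I) k k).im) := by
  have hsv : 0 < s * v := by nlinarith
  set z1 : ℂ := (u : ℂ) + (v : ℂ) * I with hz1def
  set z2 : ℂ := (u : ℂ) + (s : ℂ) * (v : ℂ) * I with hz2def
  obtain ⟨U, l, hU1, hU2, hspec⟩ : ∃ (U : Matrix (Fin N) (Fin N) ℂ) (l : Fin N → ℝ),
      U * star U = 1 ∧ star U * U = 1 ∧
        H = U * diagonal (fun a => (l a : ℂ)) * star U := by
    refine ⟨hH.eigenvectorUnitary, hH.eigenvalues, ?_, ?_, ?_⟩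
    · exact Matrix.mem_unitaryGroup_iff.mp hH.eigenvectorUnitary.2
    · exact Matrix.mem_unitaryGroup_iff'.mp hH.eigenvectorUnitary.2
    · exact hH.spectral_theorem
  have him1 : ∀ a, ((l a : ℂ) - z1).im = -v := by intro a; simp [hz1def]
  have him2 : ∀ a, ((l a : ℂ) - z2).im = -(s * v) := by intro a; simp [hz2def]
  have hre1 : ∀ a, ((l a : ℂ) - z1).re = l a - u := by intro a; simp [hz1def]
  have hre2 : ∀ a, ((l a : ℂ) - z2).re = l a - u := by intro a; simp [hz2def]
  have hnz1 : ∀ a, ((l a : ℂ) - z1) ≠ 0 := by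
    intro a h
    have h2 := him1 a
    rw [h] at h2; simp at h2; linarith
  have hnz2 : ∀ a, ((l a : ℂ) - z2) ≠ 0 := by
    intro a h
    have h2 := him2 a
    rw [h] at h2; simp only [Complex.zero_im] at h2; nlinarith
  set d1 : Fin N → ℂ := fun a => ((l a : ℂ) - z1)⁻¹ with hd1def
  set d2 : Fin N → ℂ := fun a => ((l a : ℂ) - z2)⁻¹ with hd2def
  have hR1 : R z1 = U * diagonal d1 * star U := by
    rw [hR z1, hspec]; exact aux_inv U hU1 hU2 l z1 hnz1
  have hR2 : R z2 = U * diagonal d2 * star U := by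
    rw [hR z2, hspec]; exact aux_inv U hU1 hU2 l z2 hnz2
  have hP : R z1 * R z2 = U * diagonal (fun a => d1 a * d2 a) * star U := by
    rw [hR1, hR2]; exact aux_prod U hU2 d1 d2
  have hnsq1 : ∀ a, Complex.normSq ((l a : ℂ) - z1) = (l a - u) ^ 2 + v ^ 2 := by
    intro a; rw [Complex.normSq_apply, hre1 a, him1 a]; ring
  have hnsq2 : ∀ a, Complex.normSq ((l a : ℂ) - z2) = (l a - u) ^ 2 + (s * v) ^ 2 := by
    intro a; rw [Complex.normSq_apply, hre2 a, him2 a]; ring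
  have hden1 : ∀ a, 0 < (l a - u) ^ 2 + v ^ 2 := fun a => by positivity
  have hden2 : ∀ a, 0 < (l a - u) ^ 2 + (s * v) ^ 2 := fun a => by positivity
  have hd2im : ∀ a, (d2 a).im = s * v / ((l a - u) ^ 2 + (s * v) ^ 2) := by
    intro a
    rw [show d2 a = ((l a : ℂ) - z2)⁻¹ from rfl, Complex.inv_im, him2 a, hnsq2 a]
    ring
  have hd1abs : ∀ a, ‖(d1 a)‖ ^ 2 = 1 / ((l a - u) ^ 2 + v ^ 2) := by
    intro a
    rw [show d1 a = ((l a : ℂ) - z1)⁻¹ from rfl, norm_inv, inv_pow, Complex.sq_norm,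
      hnsq1 a, one_div]
  have hd2abs : ∀ a, ‖(d2 a)‖ ^ 2 = 1 / ((l a - u) ^ 2 + (s * v) ^ 2) := by
    intro a
    rw [show d2 a = ((l a : ℂ) - z2)⁻¹ from rfl, norm_inv, inv_pow, Complex.sq_norm,
      hnsq2 a, one_div]
  set q : Fin N → Fin N → ℝ := fun i a => Complex.normSq (U i a) with hqdef
  have hq : ∀ i a, 0 ≤ q i a := fun i a => Complex.normSq_nonneg _
  have habsU : ∀ i a, ‖(U i a)‖ ^ 2 = q i a := fun i a => Complex.sq_norm _
  have hEntry1 : ∀ i i', R z1 i i' = ∑ a, U i a * d1 a * (starRingEnd ℂ) (U i' a) := by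
    intro i i'; rw [hR1]; exact aux_entry U d1 i i'
  have hEntry2 : ∀ i i', R z2 i i' = ∑ a, U i a * d2 a * (starRingEnd ℂ) (U i' a) := by
    intro i i'; rw [hR2]; exact aux_entry U d2 i i'
  -- imaginary parts on the diagonal at z2
  set B : Fin N → ℝ := fun i => ∑ a, q i a / ((l a - u) ^ 2 + (s * v) ^ 2) with hBdef
  have hBnonneg : ∀ i, 0 ≤ B i := by
    intro i; apply Finset.sum_nonneg; intro a _; exact div_nonneg (hq i a) (hden2 a).le
  have hIm2 : ∀ i, (R z2 i i).im = s * v * B i := by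
    intro i
    rw [hEntry2 i i, Complex.im_sum, hBdef]
    simp only
    rw [Finset.mul_sum]
    apply Finset.sum_congr rfl
    intro a _
    have e : U i a * d2 a * (starRingEnd ℂ) (U i a) = ((q i a : ℝ) : ℂ) * d2 a := by
      rw [hqdef]
      simp only
      rw [show ((Complex.normSq (U i a) : ℝ) : ℂ) = U i a * (starRingEnd ℂ) (U i a) from
        (Complex.mul_conj _).symm]
      ring
    rw [e]
    simp only [Complex.mul_im, Complex.ofReal_re, Complex.ofReal_im, zero_mul, add_zero]
    rw [hd2im a]
    ring
  set A : ℝ := ∑ a, q j a / ((l a - u) ^ 2 + v ^ 2) with hAdef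
  have hAnonneg : 0 ≤ A := by
    apply Finset.sum_nonneg; intro a _; exact div_nonneg (hq j a) (hden1 a).le
  have hAle : A ≤ s ^ 2 * B j := by
    rw [hAdef, hBdef]
    simp only
    rw [Finset.mul_sum]
    apply Finset.sum_le_sum
    intro a _
    rw [← mul_div_assoc, div_le_div_iff₀ (hden1 a) (hden2 a)]
    have hs2 : 1 ≤ s ^ 2 := by nlinarith
    nlinarith [mul_nonneg (hq j a) (sq_nonneg (l a - u)), hs2]
  -- Cauchy-Schwarz bound on the product entry
  have hPabs : ∀ k', ‖((R z1 * R z2) j k')‖ ≤ Real.sqrt A * Real.sqrt (B k') := by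
    intro k'
    rw [hP, aux_entry]
    calc ‖(∑ a, U j a * (d1 a * d2 a) * (starRingEnd ℂ) (U k' a))‖
        ≤ ∑ a, ‖(U j a * (d1 a * d2 a) * (starRingEnd ℂ) (U k' a))‖ :=
          norm_sum_le _ _
      _ = ∑ a, (‖(U j a)‖ * ‖(d1 a)‖) *
            (‖(U k' a)‖ * ‖(d2 a)‖) := by
          apply Finset.sum_congr rfl
          intro a _
          simp only [norm_mul, Complex.norm_conj]
          ring
      _ ≤ Real.sqrt (∑ a, (‖(U j a)‖ * ‖(d1 a)‖) ^ 2) *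
            Real.sqrt (∑ a, (‖(U k' a)‖ * ‖(d2 a)‖) ^ 2) :=
          Real.sum_mul_le_sqrt_mul_sqrt _ _ _
      _ = Real.sqrt A * Real.sqrt (B k') := by
          congr 1
          · congr 1
            apply Finset.sum_congr rfl
            intro a _
            rw [mul_pow, habsU, hd1abs]
            ring
          · congr 1
            apply Finset.sum_congr rfl
            intro a _
            rw [mul_pow, habsU, hd2abs]
            ring
  -- resolvent identity
  have hiden : ∀ k', R z1 j k' = R z2 j k' + (z1 - z2) * ((R z1 * R z2) j k') := by
    intro k'
    rw [hEntry1 j k', hEntry2 j k', hP, aux_entry, Finset.mul_sum, ← Finset.sum_add_distrib]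
    apply Finset.sum_congr rfl
    intro a _
    have e : d1 a = d2 a + (z1 - z2) * (d1 a * d2 a) := by
      rw [show d1 a = ((l a : ℂ) - z1)⁻¹ from rfl, show d2 a = ((l a : ℂ) - z2)⁻¹ from rfl]
      exact aux_resid _ _ _ (hnz1 a) (hnz2 a)
    calc U j a * d1 a * (starRingEnd ℂ) (U k' a)
        = U j a * (d2 a + (z1 - z2) * (d1 a * d2 a)) * (starRingEnd ℂ) (U k' a) := by rw [← e]
      _ = U j a * d2 a * (starRingEnd ℂ) (U k' a) +
            (z1 - z2) * (U j a * (d1 a * d2 a) * (starRingEnd ℂ) (U k' a)) := by ring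
  have habsz : ‖(z1 - z2)‖ = (s - 1) * v := by
    have e : z1 - z2 = ((v - s * v : ℝ) : ℂ) * I := by
      rw [hz1def, hz2def]; push_cast; ring
    rw [e, norm_mul, Complex.norm_I, Complex.norm_real, Real.norm_eq_abs, mul_one, abs_of_nonpos (by nlinarith)]
    ring
  have part2 : ∀ k', ‖(R z1 j k')‖ ≤
      ‖(R z2 j k')‖ + (s - 1) * v * ‖((R z1 * R z2) j k')‖ := by
    intro k'
    rw [hiden k']
    refine le_trans (norm_add_le _ _) ?_
    rw [norm_mul, habsz]
  have part3core : ∀ k', v * ‖((R z1 * R z2) j k')‖ ≤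
      Real.sqrt ((R z2 j j).im * (R z2 k' k').im) := by
    intro k'
    have h1 : Real.sqrt A ≤ s * Real.sqrt (B j) := by
      have e : s * Real.sqrt (B j) = Real.sqrt (s ^ 2 * B j) := by
        rw [Real.sqrt_mul (by positivity), Real.sqrt_sq (by linarith)]
      rw [e]
      exact Real.sqrt_le_sqrt hAle
    have h2 : Real.sqrt ((R z2 j j).im * (R z2 k' k').im) =
        s * v * (Real.sqrt (B j) * Real.sqrt (B k')) := by
      rw [hIm2 j, hIm2 k', show s * v * B j * (s * v * B k') = (s * v) ^ 2 * (B j * B k') by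
        ring, Real.sqrt_mul (by positivity), Real.sqrt_sq hsv.le,
        Real.sqrt_mul (hBnonneg j)]
    calc v * ‖((R z1 * R z2) j k')‖
        ≤ v * (Real.sqrt A * Real.sqrt (B k')) :=
          mul_le_mul_of_nonneg_left (hPabs k') hv.le
      _ ≤ v * ((s * Real.sqrt (B j)) * Real.sqrt (B k')) := by
          apply mul_le_mul_of_nonneg_left _ hv.le
          exact mul_le_mul_of_nonneg_right h1 (Real.sqrt_nonneg _)
      _ = s * v * (Real.sqrt (B j) * Real.sqrt (B k')) := by ring
      _ = Real.sqrt ((R z2 j j).im * (R z2 k' k').im) := h2.symm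
  have part3 : ∀ k', ‖(R z2 j k')‖ +
        (s - 1) * v * ‖((R z1 * R z2) j k')‖ ≤
      ‖(R z2 j k')‖ +
        (s - 1) * Real.sqrt ((R z2 j j).im * (R z2 k' k').im) := by
    intro k'
    have h := mul_le_mul_of_nonneg_left (part3core k') (by linarith : (0:ℝ) ≤ s - 1)
    nlinarith [h]
  refine ⟨?_, part2 k, part3 k⟩
  -- part 1
  have hImjj : 0 ≤ (R z2 j j).im := by
    rw [hIm2 j]; exact mul_nonneg hsv.le (hBnonneg j)
  have hsq : Real.sqrt ((R z2 j j).im * (R z2 j j).im) = (R z2 j j).im :=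
    Real.sqrt_mul_self hImjj
  have h1 := (part2 j).trans (part3 j)
  rw [hsq] at h1
  have h2 : (R z2 j j).im ≤ ‖(R z2 j j)‖ := Complex.im_le_norm _
  calc ‖(R z1 j j)‖
      ≤ ‖(R z2 j j)‖ + (s - 1) * (R z2 j j).im := h1
    _ ≤ ‖(R z2 j j)‖ + (s - 1) * ‖(R z2 j j)‖ := by
        have := mul_le_mul_of_nonneg_left h2 (by linarith : (0:ℝ) ≤ s - 1)
        linarith
    _ = s * ‖(R z2 j j)‖ := by ring
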